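/- Let δ > 0 and let X : [−δ,δ]³ → ℝ be C⁴ with X(0,x,y) = x for all x, y. For t ≠ 0 define ρ(t,x,y) = (X(t,x,y) − x)/t − X'_t(0,x,y) − X''_tt(0,x,y)·t/2. Then, uniformly in (x,y) ∈ [−δ,δ]²: ρ(t,x,y) → 0, ρ'_t(t,x,y) → 0, ρ'_y(t,x,y) → 0, ρ''_ty(t,x,y) → 0, ρ''_yy(t,x,y) → 0, ρ'_x(t,x,y) → 0, ρ''_tx(t,x,y) → 0 and ρ''_xx(t,x,y) → 0 as t → 0, and ρ''_tt(t,x,y) → X'''_ttt(0,x,y)/3 as t → 0. -/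

import Mathlib

open Set Filter Topology
namespace Stmt15





def K (δ : ℝ) : Set (ℝ × ℝ × ℝ) := Icc (-δ) δ ×ˢ Icc (-δ) δ ×ˢ Icc (-δ) δ

variable {δ : ℝ}

lemma udK (hδ : 0 < δ) : UniqueDiffOn ℝ (K δ) :=
  (uniqueDiffOn_Icc (neg_lt_self hδ)).prod
    ((uniqueDiffOn_Icc (neg_lt_self hδ)).prod (uniqueDiffOn_Icc (neg_lt_self hδ)))

lemma K_cl_int (hδ : 0 < δ) : K δ ⊆ closure (interior (K δ)) := by
  have hne : (-δ) ≠ δ := ne_of_lt (neg_lt_self hδ)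
  rw [K, interior_prod_eq, interior_prod_eq, closure_prod_eq, closure_prod_eq,
    interior_Icc, closure_Ioo hne]

lemma mem_K {p : ℝ × ℝ × ℝ} : p ∈ K δ ↔
    p.1 ∈ Icc (-δ) δ ∧ p.2.1 ∈ Icc (-δ) δ ∧ p.2.2 ∈ Icc (-δ) δ :=
  ⟨fun h => ⟨h.1, h.2.1, h.2.2⟩, fun h => ⟨h.1, h.2.1, h.2.2⟩⟩

/-- directional (partial) derivative within the cube -/
noncomputable def Dv (δ : ℝ) (v : ℝ × ℝ × ℝ) (g : ℝ × ℝ × ℝ → ℝ) : ℝ × ℝ × ℝ → ℝ :=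
  fun p => fderivWithin ℝ g (K δ) p v

lemma contDiffOn_Dv (hδ : 0 < δ) {n : WithTop ℕ∞} {m : WithTop ℕ∞} {g : ℝ × ℝ × ℝ → ℝ}
    (hg : ContDiffOn ℝ n g (K δ)) (hmn : m + 1 ≤ n) (v : ℝ × ℝ × ℝ) :
    ContDiffOn ℝ m (Dv δ v g) (K δ) :=
  (hg.fderivWithin (udK hδ) hmn).clm_apply contDiffOn_const

lemma slice1 {g : ℝ × ℝ × ℝ → ℝ} {t x y : ℝ}
    (hg : DifferentiableWithinAt ℝ g (K δ) (t, x, y))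
    (hx : x ∈ Icc (-δ) δ) (hy : y ∈ Icc (-δ) δ) :
    HasDerivWithinAt (fun s => g (s, x, y)) (Dv δ (1, 0, 0) g (t, x, y)) (Icc (-δ) δ) t := by
  have hL : HasDerivWithinAt (fun s : ℝ => (s, x, y)) ((1 : ℝ), (0 : ℝ), (0 : ℝ))
      (Icc (-δ) δ) t :=
    (HasDerivAt.prodMk (hasDerivAt_id t) (hasDerivAt_const _ _)).hasDerivWithinAt
  have hmaps : MapsTo (fun s : ℝ => (s, x, y)) (Icc (-δ) δ) (K δ) := fun s hs =>
    mem_K.2 ⟨hs, hx, hy⟩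
  exact hg.hasFDerivWithinAt.comp_hasDerivWithinAt t hL hmaps

lemma slice2 {g : ℝ × ℝ × ℝ → ℝ} {t x y : ℝ}
    (hg : DifferentiableWithinAt ℝ g (K δ) (t, x, y))
    (ht : t ∈ Icc (-δ) δ) (hy : y ∈ Icc (-δ) δ) :
    HasDerivWithinAt (fun w => g (t, w, y)) (Dv δ (0, 1, 0) g (t, x, y)) (Icc (-δ) δ) x := by
  have hL : HasDerivWithinAt (fun w : ℝ => (t, w, y)) ((0 : ℝ), (1 : ℝ), (0 : ℝ))
      (Icc (-δ) δ) x :=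
    (HasDerivAt.prodMk (hasDerivAt_const _ _) (HasDerivAt.prodMk (hasDerivAt_id x) (hasDerivAt_const _ _))).hasDerivWithinAt
  have hmaps : MapsTo (fun w : ℝ => (t, w, y)) (Icc (-δ) δ) (K δ) := fun s hs =>
    mem_K.2 ⟨ht, hs, hy⟩
  exact hg.hasFDerivWithinAt.comp_hasDerivWithinAt x hL hmaps

lemma slice3 {g : ℝ × ℝ × ℝ → ℝ} {t x y : ℝ}
    (hg : DifferentiableWithinAt ℝ g (K δ) (t, x, y))
    (ht : t ∈ Icc (-δ) δ) (hx : x ∈ Icc (-δ) δ) :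
    HasDerivWithinAt (fun z => g (t, x, z)) (Dv δ (0, 0, 1) g (t, x, y)) (Icc (-δ) δ) y := by
  have hL : HasDerivWithinAt (fun z : ℝ => (t, x, z)) ((0 : ℝ), (0 : ℝ), (1 : ℝ))
      (Icc (-δ) δ) y :=
    (HasDerivAt.prodMk (hasDerivAt_const _ _) (HasDerivAt.prodMk (hasDerivAt_const _ _) (hasDerivAt_id y))).hasDerivWithinAt
  have hmaps : MapsTo (fun z : ℝ => (t, x, z)) (Icc (-δ) δ) (K δ) := fun s hs =>
    mem_K.2 ⟨ht, hx, hs⟩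
  exact hg.hasFDerivWithinAt.comp_hasDerivWithinAt y hL hmaps

lemma glue (hδ : 0 < δ) {g : ℝ × ℝ × ℝ → ℝ} {p : ℝ × ℝ × ℝ} (hp : p ∈ K δ)
    (hg2 : DifferentiableWithinAt ℝ (fderivWithin ℝ g (K δ)) (K δ) p) (v w : ℝ × ℝ × ℝ) :
    Dv δ v (Dv δ w g) p = fderivWithin ℝ (fderivWithin ℝ g (K δ)) (K δ) p v w := by
  show fderivWithin ℝ (fun q => fderivWithin ℝ g (K δ) q w) (K δ) p v = _
  rw [fderivWithin_clm_apply (udK hδ p hp) hg2 (differentiableWithinAt_const w)]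
  rw [fderivWithin_const_apply w]
  simp

lemma swapD (hδ : 0 < δ) {n : WithTop ℕ∞} {g : ℝ × ℝ × ℝ → ℝ}
    (hg : ContDiffOn ℝ n g (K δ)) (hn : 2 ≤ n) {p : ℝ × ℝ × ℝ} (hp : p ∈ K δ)
    (v w : ℝ × ℝ × ℝ) :
    Dv δ v (Dv δ w g) p = Dv δ w (Dv δ v g) p := by
  have hsym := (hg p hp).isSymmSndFDerivWithinAt (by simpa [minSmoothness_of_isRCLikeNormedField] using hn) (udK hδ) (K_cl_int hδ hp) hp
  have h1 : (1 : WithTop ℕ∞) + 1 ≤ n := by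
    refine le_trans (by norm_num) hn
  have hdiff : DifferentiableWithinAt ℝ (fderivWithin ℝ g (K δ)) (K δ) p :=
    ((hg.fderivWithin (udK hδ) h1).differentiableOn one_ne_zero) p hp
  rw [glue hδ hp hdiff v w, glue hδ hp hdiff w v, hsym.eq v w]









/-- uniform continuity modulus in the first variable -/
lemma uc (hδ : 0 < δ) {φ : ℝ × ℝ × ℝ → ℝ}
    (hφ : ContinuousOn φ (Icc (-δ) δ ×ˢ Icc (-δ) δ ×ˢ Icc (-δ) δ)) {ε : ℝ} (hε : 0 < ε) :
    ∃ η > 0, ∀ s x y : ℝ, s ∈ Icc (-δ) δ → x ∈ Icc (-δ) δ → y ∈ Icc (-δ) δ → |s| ≤ η →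
      |φ (s, x, y) - φ (0, x, y)| ≤ ε := by
  have hK : IsCompact (Icc (-δ) δ ×ˢ Icc (-δ) δ ×ˢ Icc (-δ) δ : Set (ℝ × ℝ × ℝ)) :=
    isCompact_Icc.prod (isCompact_Icc.prod isCompact_Icc)
  have huc := hK.uniformContinuousOn_of_continuous hφ
  rw [Metric.uniformContinuousOn_iff] at huc
  obtain ⟨η, hη, h⟩ := huc ε hε
  refine ⟨η / 2, by positivity, fun s x y hs hx hy hsη => ?_⟩
  have h0 : (0 : ℝ) ∈ Icc (-δ) δ := by constructor <;> [linarith; linarith]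
  have hp : ((s, x, y) : ℝ × ℝ × ℝ) ∈ Icc (-δ) δ ×ˢ Icc (-δ) δ ×ˢ Icc (-δ) δ := ⟨hs, hx, hy⟩
  have hq : ((0, x, y) : ℝ × ℝ × ℝ) ∈ Icc (-δ) δ ×ˢ Icc (-δ) δ ×ˢ Icc (-δ) δ := ⟨h0, hx, hy⟩
  have hd : dist ((s, x, y) : ℝ × ℝ × ℝ) (0, x, y) < η := by
    rw [Prod.dist_eq, Prod.dist_eq]
    simp only [dist_self]
    have : dist s 0 = |s| := by rw [Real.dist_eq, sub_zero]
    rw [this]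
    have : max |s| (max 0 0) = |s| := by simp [abs_nonneg]
    rw [this]
    linarith
  have := h _ hp _ hq hd
  rw [Real.dist_eq] at this
  linarith

/-- mean value estimate on the segment from `0` to `t` -/
lemma step {t : ℝ} (ht : t ∈ Icc (-δ) δ) {g g' : ℝ → ℝ}
    (h : ∀ s ∈ Icc (-δ) δ, HasDerivWithinAt g (g' s) (Icc (-δ) δ) s) {B : ℝ}
    (hb : ∀ s ∈ Icc (-δ) δ, |s| ≤ |t| → |g' s| ≤ B) :
    |g t - g 0| ≤ B * |t| := by
  set J : Set ℝ := Icc (min 0 t) (max 0 t) with hJ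
  have hsub : J ⊆ Icc (-δ) δ := by
    apply Icc_subset_Icc
    · rcases le_or_gt 0 t with h' | h'
      · simp only [min_eq_left h']; linarith [ht.1, ht.2]
      · simp only [min_eq_right h'.le]; exact ht.1
    · rcases le_or_gt 0 t with h' | h'
      · simp only [max_eq_right h']; exact ht.2
      · simp only [max_eq_left h'.le]; linarith [ht.1, ht.2]
  have habs : ∀ s ∈ J, |s| ≤ |t| := by
    intro s hs
    rw [abs_le]
    constructor
    · calc -|t| ≤ min 0 t := by rcases abs_cases t with ⟨h1, _⟩ | ⟨h1, _⟩ <;> simp [h1] <;> linarith [abs_nonneg t, neg_abs_le t]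
      _ ≤ s := hs.1
    · calc s ≤ max 0 t := hs.2
      _ ≤ |t| := by rcases abs_cases t with ⟨h1, _⟩ | ⟨h1, _⟩ <;> simp <;> [linarith [abs_nonneg t]; linarith [le_abs_self t, abs_nonneg t]]
  have h0J : (0 : ℝ) ∈ J := ⟨min_le_left _ _, le_max_left _ _⟩
  have htJ : t ∈ J := ⟨min_le_right _ _, le_max_right _ _⟩
  have := Convex.norm_image_sub_le_of_norm_hasDerivWithin_le
    (f := g) (f' := g') (C := B) (s := J)
    (fun s hs => (h s (hsub hs)).mono hsub)
    (fun s hs => by rw [Real.norm_eq_abs]; exact hb s (hsub hs) (habs s hs))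
    (convex_Icc _ _) h0J htJ
  rw [Real.norm_eq_abs, Real.norm_eq_abs, sub_zero] at this
  exact this











/-- second order Taylor bounds -/
lemma taylor2 {t : ℝ} (ht : t ∈ Icc (-δ) δ) {f f' f'' : ℝ → ℝ} {ε : ℝ}
    (h1 : ∀ s ∈ Icc (-δ) δ, HasDerivWithinAt f (f' s) (Icc (-δ) δ) s)
    (h2 : ∀ s ∈ Icc (-δ) δ, HasDerivWithinAt f' (f'' s) (Icc (-δ) δ) s)
    (hb : ∀ s ∈ Icc (-δ) δ, |s| ≤ |t| → |f'' s - f'' 0| ≤ ε) :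
    |f' t - f' 0 - t * f'' 0| ≤ ε * |t| ∧
      |f t - f 0 - t * f' 0 - t ^ 2 / 2 * f'' 0| ≤ ε * |t| * |t| := by
  have hε : 0 ≤ ε := by
    have h0 : (0 : ℝ) ∈ Icc (-δ) δ := by
      rcases mem_Icc.1 ht with ⟨a, b⟩
      exact mem_Icc.2 ⟨by linarith, by linarith⟩
    simpa using hb 0 h0 (by simp)
  have key1 : ∀ s ∈ Icc (-δ) δ, |s| ≤ |t| → |f' s - f' 0 - s * f'' 0| ≤ ε * |s| := by
    intro s hs hst
    have hstep := step hs (g := fun u => f' u - u * f'' 0) (g' := fun u => f'' u - f'' 0)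
      (fun u hu => ((h2 u hu).sub (((hasDerivAt_id u).mul_const (f'' 0)).hasDerivWithinAt.congr_deriv (by ring)))) 
      (fun u hu hus => hb u hu (hus.trans hst))
    ring_nf at hstep ⊢; exact hstep
  refine ⟨key1 t ht le_rfl, ?_⟩
  · have hstep := step ht (g := fun u => f u - u * f' 0 - u ^ 2 / 2 * f'' 0)
      (g' := fun u => f' u - f' 0 - u * f'' 0) (B := ε * |t|)
      (fun u hu => by
        have hd : HasDerivWithinAt (fun u : ℝ => u ^ 2 / 2 * f'' 0) (u * f'' 0) (Icc (-δ) δ) u := by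
          have := ((hasDerivAt_pow 2 u).div_const 2).mul_const (f'' 0)
          exact this.hasDerivWithinAt.congr_deriv (by ring)
        exact ((h1 u hu).sub (((hasDerivAt_id u).mul_const (f' 0)).hasDerivWithinAt.congr_deriv (by ring))).sub hd)
      (fun u hu hus => by
        have := key1 u hu hus
        have h2' : ε * |u| ≤ ε * |t| := mul_le_mul_of_nonneg_left hus hε
        linarith)
    ring_nf at hstep ⊢; exact hstep

/-- third order Taylor bounds -/
lemma taylor3 {t : ℝ} (ht : t ∈ Icc (-δ) δ) {f f' f'' f''' : ℝ → ℝ} {ε : ℝ}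
    (h1 : ∀ s ∈ Icc (-δ) δ, HasDerivWithinAt f (f' s) (Icc (-δ) δ) s)
    (h2 : ∀ s ∈ Icc (-δ) δ, HasDerivWithinAt f' (f'' s) (Icc (-δ) δ) s)
    (h3 : ∀ s ∈ Icc (-δ) δ, HasDerivWithinAt f'' (f''' s) (Icc (-δ) δ) s)
    (hb : ∀ s ∈ Icc (-δ) δ, |s| ≤ |t| → |f''' s - f''' 0| ≤ ε) :
    |f'' t - f'' 0 - t * f''' 0| ≤ ε * |t| ∧
    |f' t - f' 0 - t * f'' 0 - t ^ 2 / 2 * f''' 0| ≤ ε * |t| * |t| ∧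
    |f t - f 0 - t * f' 0 - t ^ 2 / 2 * f'' 0 - t ^ 3 / 6 * f''' 0| ≤ ε * |t| * |t| * |t| := by
  have key2 : ∀ s ∈ Icc (-δ) δ, |s| ≤ |t| → |f'' s - f'' 0 - s * f''' 0| ≤ ε * |s| := by
    intro s hs hst
    have hstep := step hs (g := fun u => f'' u - u * f''' 0) (g' := fun u => f''' u - f''' 0)
      (fun u hu => ((h3 u hu).sub (((hasDerivAt_id u).mul_const (f''' 0)).hasDerivWithinAt.congr_deriv (by ring))))
      (fun u hu hus => hb u hu (hus.trans hst))
    ring_nf at hstep ⊢; exact hstep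
  have hε : 0 ≤ ε := by
    have h0 : (0 : ℝ) ∈ Icc (-δ) δ := by
      rcases mem_Icc.1 ht with ⟨a, b⟩
      exact mem_Icc.2 ⟨by linarith, by linarith⟩
    simpa using hb 0 h0 (by simp)
  have key1 : ∀ s ∈ Icc (-δ) δ, |s| ≤ |t| →
      |f' s - f' 0 - s * f'' 0 - s ^ 2 / 2 * f''' 0| ≤ ε * |t| * |s| := by
    intro s hs hst
    have hstep := step hs (g := fun u => f' u - u * f'' 0 - u ^ 2 / 2 * f''' 0)
      (g' := fun u => f'' u - f'' 0 - u * f''' 0) (B := ε * |t|)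
      (fun u hu => by
        have hd : HasDerivWithinAt (fun u : ℝ => u ^ 2 / 2 * f''' 0) (u * f''' 0) (Icc (-δ) δ) u :=
          (((hasDerivAt_pow 2 u).div_const 2).mul_const (f''' 0)).hasDerivWithinAt.congr_deriv (by ring)
        exact ((h2 u hu).sub (((hasDerivAt_id u).mul_const (f'' 0)).hasDerivWithinAt.congr_deriv (by ring))).sub hd)
      (fun u hu hus => by
        have := key2 u hu (hus.trans hst)
        have h2' : ε * |u| ≤ ε * |t| := mul_le_mul_of_nonneg_left (hus.trans hst) hε
        linarith)
    ring_nf at hstep ⊢; exact hstep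
  have key0 : |f t - f 0 - t * f' 0 - t ^ 2 / 2 * f'' 0 - t ^ 3 / 6 * f''' 0|
      ≤ ε * |t| * |t| * |t| := by
    have hstep := step ht (g := fun u => f u - u * f' 0 - u ^ 2 / 2 * f'' 0 - u ^ 3 / 6 * f''' 0)
      (g' := fun u => f' u - f' 0 - u * f'' 0 - u ^ 2 / 2 * f''' 0) (B := ε * |t| * |t|)
      (fun u hu => by
        have hd2 : HasDerivWithinAt (fun u : ℝ => u ^ 2 / 2 * f'' 0) (u * f'' 0) (Icc (-δ) δ) u :=
          (((hasDerivAt_pow 2 u).div_const 2).mul_const (f'' 0)).hasDerivWithinAt.congr_deriv (by ring)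
        have hd3 : HasDerivWithinAt (fun u : ℝ => u ^ 3 / 6 * f''' 0) (u ^ 2 / 2 * f''' 0) (Icc (-δ) δ) u :=
          (((hasDerivAt_pow 3 u).div_const 6).mul_const (f''' 0)).hasDerivWithinAt.congr_deriv (by ring)
        exact (((h1 u hu).sub (((hasDerivAt_id u).mul_const (f' 0)).hasDerivWithinAt.congr_deriv (by ring))).sub hd2).sub hd3)
      (fun u hu hus => by
        have := key1 u hu hus
        have h2' : ε * |t| * |u| ≤ ε * |t| * |t| :=
          mul_le_mul_of_nonneg_left hus (by positivity)
        linarith)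
    ring_nf at hstep ⊢; exact hstep
  exact ⟨by simpa using key2 t ht le_rfl, by simpa using key1 t ht le_rfl, key0⟩









/-- bound on a full `deriv` at a possibly-boundary point from a within-derivative -/
lemma lemA (hδ : 0 < δ) {f : ℝ → ℝ} {y c C : ℝ} (hy : y ∈ Icc (-δ) δ)
    (h : HasDerivWithinAt f c (Icc (-δ) δ) y) (hc : |c| ≤ C) (hC : 0 ≤ C) :
    |deriv f y| ≤ C := by
  by_cases hd : DifferentiableAt ℝ f y
  · have h2 : HasDerivWithinAt f (deriv f y) (Icc (-δ) δ) y :=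
      hd.hasDerivAt.hasDerivWithinAt
    have := (uniqueDiffOn_Icc (neg_lt_self hδ) y hy).eq_deriv _ h2 h
    rwa [this]
  · simp [deriv_zero_of_not_differentiableAt hd, hC]

/-- bound on a full second `deriv` at a possibly-boundary point -/
lemma lemB (hδ : 0 < δ) {f g : ℝ → ℝ} {y c C : ℝ} (hy : y ∈ Icc (-δ) δ)
    (hfg : ∀ z ∈ Ioo (-δ) δ, deriv f z = g z)
    (hg : HasDerivWithinAt g c (Icc (-δ) δ) y) (hc : |c| ≤ C) (hC : 0 ≤ C) :
    |deriv (deriv f) y| ≤ C := by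
  have hne : (-δ) < δ := neg_lt_self hδ
  by_cases hd : DifferentiableAt ℝ (deriv f) y
  · have hycl : y ∈ closure (Ioo (-δ) δ) := by
      rw [closure_Ioo hne.ne]; exact hy
    have hnb : (𝓝[Ioo (-δ) δ] y).NeBot := mem_closure_iff_nhdsWithin_neBot.1 hycl
    have h1 : Tendsto (deriv f) (𝓝[Ioo (-δ) δ] y) (𝓝 (deriv f y)) :=
      (hd.continuousAt.continuousWithinAt).tendsto
    have h2 : Tendsto g (𝓝[Ioo (-δ) δ] y) (𝓝 (g y)) :=
      (hg.continuousWithinAt.mono Ioo_subset_Icc_self).tendsto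
    have heq : deriv f =ᶠ[𝓝[Ioo (-δ) δ] y] g :=
      eventually_mem_nhdsWithin.mono fun z hz => hfg z hz
    have hval : deriv f y = g y := tendsto_nhds_unique (h1.congr' heq) h2
    set s' : Set ℝ := insert y (Ioo (-δ) δ) with hs'
    have hud : UniqueDiffWithinAt ℝ s' y := by
      have : UniqueDiffWithinAt ℝ (Ioo (-δ) δ) y :=
        uniqueDiffWithinAt_convex (convex_Ioo _ _)
          (by rw [interior_Ioo]; exact nonempty_Ioo.2 hne) hycl
      exact this.mono (subset_insert _ _)
    have hsub : s' ⊆ Icc (-δ) δ := insert_subset hy Ioo_subset_Icc_self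
    have hA : HasDerivWithinAt (deriv f) (deriv (deriv f) y) s' y :=
      hd.hasDerivAt.hasDerivWithinAt
    have hB : HasDerivWithinAt (deriv f) c s' y := by
      refine (hg.mono hsub).congr ?_ hval
      intro z hz
      rcases hz with rfl | hz
      · exact hval
      · exact hfg z hz
    have := hud.eq_deriv _ hA hB
    rwa [this]
  · simp [deriv_zero_of_not_differentiableAt hd, hC]






lemma bound1 {E t ε : ℝ} (ht : t ≠ 0) (h1 : |t| ≤ 1) (h : |E| ≤ ε * |t| * |t|) :
    |E / t| ≤ ε := by
  have h0 : 0 < |t| := abs_pos.2 ht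
  rw [abs_div, div_le_iff₀ h0]
  nlinarith [abs_nonneg E]

lemma bound2 {E1 E0 t ε : ℝ} (ht : t ≠ 0) (h1 : |E1| ≤ ε * |t|)
    (h0 : |E0| ≤ ε * |t| * |t|) : |E1 / t - E0 / t ^ 2| ≤ 2 * ε := by
  have h0' : 0 < |t| := abs_pos.2 ht
  have ha : |E1 / t| ≤ ε := by
    rw [abs_div, div_le_iff₀ h0']; nlinarith
  have hb : |E0 / t ^ 2| ≤ ε := by
    rw [abs_div, abs_pow, div_le_iff₀ (by positivity)]; nlinarith
  calc |E1 / t - E0 / t ^ 2| ≤ |E1 / t| + |E0 / t ^ 2| := abs_sub _ _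
    _ ≤ 2 * ε := by linarith

lemma bound3 {E2 E1 E0 t ε : ℝ} (ht : t ≠ 0) (h2 : |E2| ≤ ε * |t|)
    (h1 : |E1| ≤ ε * |t| * |t|) (h0 : |E0| ≤ ε * |t| * |t| * |t|) :
    |E2 / t - 2 * E1 / t ^ 2 + 2 * E0 / t ^ 3| ≤ 5 * ε := by
  have h0' : 0 < |t| := abs_pos.2 ht
  have ha : |E2 / t| ≤ ε := by
    rw [abs_div, div_le_iff₀ h0']; nlinarith
  have hb : |2 * E1 / t ^ 2| ≤ 2 * ε := by
    rw [abs_div, abs_pow, div_le_iff₀ (by positivity), abs_mul]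
    have : |(2:ℝ)| = 2 := by norm_num
    rw [this]; nlinarith
  have hc : |2 * E0 / t ^ 3| ≤ 2 * ε := by
    rw [abs_div, abs_pow, div_le_iff₀ (by positivity), abs_mul]
    have : |(2:ℝ)| = 2 := by norm_num
    rw [this]; nlinarith [pow_pos h0' 3]
  calc |E2 / t - 2 * E1 / t ^ 2 + 2 * E0 / t ^ 3|
      ≤ |E2 / t - 2 * E1 / t ^ 2| + |2 * E0 / t ^ 3| := abs_add_le _ _
    _ ≤ |E2 / t| + |2 * E1 / t ^ 2| + |2 * E0 / t ^ 3| := by linarith [abs_sub (E2 / t) (2 * E1 / t ^ 2)]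
    _ ≤ 5 * ε := by linarith



end Stmt15

open Stmt15

set_option maxHeartbeats 4000000 in
/-- Appendix B.1: properties of the remainder
`ρ(t,x,y) = (X(t,x,y) - x)/t - X'_t(0,x,y) - X''_tt(0,x,y)·t/2`:
it tends to `0` together with `ρ'_t`, `ρ'_y`, `ρ''_ty`, `ρ''_yy`, `ρ'_x`, `ρ''_tx`,
`ρ''_xx` as `t → 0`, uniformly in `(x,y) ∈ [-δ,δ]²`, while
`ρ''_tt → X'''_ttt(0,x,y)/3`. -/
theorem stmt_15
    (δ : ℝ) (hδ : 0 < δ)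
    (X : ℝ → ℝ → ℝ → ℝ)
    (hX : ContDiffOn ℝ 4 (fun p : ℝ × ℝ × ℝ => X p.1 p.2.1 p.2.2)
      (Icc (-δ) δ ×ˢ Icc (-δ) δ ×ˢ Icc (-δ) δ))
    (hinit : ∀ x y : ℝ, X 0 x y = x)
    (ρ : ℝ → ℝ → ℝ → ℝ)
    (hρ : ∀ t x y : ℝ, t ≠ 0 → ρ t x y =
      (X t x y - x) / t - deriv (fun s => X s x y) 0 -
        iteratedDeriv 2 (fun s => X s x y) 0 * t / 2) :
    ∀ ε > (0 : ℝ), ∃ η > (0 : ℝ), ∀ t x y : ℝ,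
      t ≠ 0 → |t| ≤ η → |x| ≤ δ → |y| ≤ δ →
      |ρ t x y| ≤ ε ∧
      |deriv (fun s => ρ s x y) t| ≤ ε ∧
      |deriv (fun z => ρ t x z) y| ≤ ε ∧
      |deriv (fun z => deriv (fun s => ρ s x z) t) y| ≤ ε ∧
      |iteratedDeriv 2 (fun z => ρ t x z) y| ≤ ε ∧
      |deriv (fun w => ρ t w y) x| ≤ ε ∧
      |deriv (fun w => deriv (fun s => ρ s w y) t) x| ≤ ε ∧
      |iteratedDeriv 2 (fun w => ρ t w y) x| ≤ ε ∧
      |iteratedDeriv 2 (fun s => ρ s x y) t -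
        iteratedDeriv 3 (fun s => X s x y) 0 / 3| ≤ ε := by
  intro ε hε
  set F : ℝ × ℝ × ℝ → ℝ := fun p => X p.1 p.2.1 p.2.2 with hFdef
  have hF4 : ContDiffOn ℝ 4 F (K δ) := hX
  have hud := udK hδ
  -- the partial-derivative hierarchy
  set X1 := Dv δ (1,0,0) F with hX1def
  set X2 := Dv δ (1,0,0) X1 with hX2def
  set X3 := Dv δ (1,0,0) X2 with hX3def
  set Y1 := Dv δ (0,0,1) F with hY1def
  set A1 := Dv δ (0,0,1) X1 with hA1def
  set Bb1 := Dv δ (0,0,1) X2 with hBb1def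
  set Y2 := Dv δ (0,0,1) Y1 with hY2def
  set A2 := Dv δ (0,0,1) A1 with hA2def
  set B2 := Dv δ (0,0,1) Bb1 with hB2def
  set W1 := Dv δ (0,1,0) F with hW1def
  set C1 := Dv δ (0,1,0) X1 with hC1def
  set D1 := Dv δ (0,1,0) X2 with hD1def
  set W2 := Dv δ (0,1,0) W1 with hW2def
  set C2 := Dv δ (0,1,0) C1 with hC2def
  set D2 := Dv δ (0,1,0) D1 with hD2def
  -- smoothness
  have hX1s : ContDiffOn ℝ 3 X1 (K δ) := contDiffOn_Dv hδ hF4 (by norm_num) _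
  have hX2s : ContDiffOn ℝ 2 X2 (K δ) := contDiffOn_Dv hδ hX1s (by norm_num) _
  have hX3s : ContDiffOn ℝ 1 X3 (K δ) := contDiffOn_Dv hδ hX2s (by norm_num) _
  have hY1s : ContDiffOn ℝ 3 Y1 (K δ) := contDiffOn_Dv hδ hF4 (by norm_num) _
  have hA1s : ContDiffOn ℝ 2 A1 (K δ) := contDiffOn_Dv hδ hX1s (by norm_num) _
  have hBb1s : ContDiffOn ℝ 1 Bb1 (K δ) := contDiffOn_Dv hδ hX2s (by norm_num) _
  have hY2s : ContDiffOn ℝ 2 Y2 (K δ) := contDiffOn_Dv hδ hY1s (by norm_num) _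
  have hA2s : ContDiffOn ℝ 1 A2 (K δ) := contDiffOn_Dv hδ hA1s (by norm_num) _
  have hB2s : ContDiffOn ℝ 0 B2 (K δ) := contDiffOn_Dv hδ hBb1s (by norm_num) _
  have hW1s : ContDiffOn ℝ 3 W1 (K δ) := contDiffOn_Dv hδ hF4 (by norm_num) _
  have hC1s : ContDiffOn ℝ 2 C1 (K δ) := contDiffOn_Dv hδ hX1s (by norm_num) _
  have hD1s : ContDiffOn ℝ 1 D1 (K δ) := contDiffOn_Dv hδ hX2s (by norm_num) _
  have hW2s : ContDiffOn ℝ 2 W2 (K δ) := contDiffOn_Dv hδ hW1s (by norm_num) _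
  have hC2s : ContDiffOn ℝ 1 C2 (K δ) := contDiffOn_Dv hδ hC1s (by norm_num) _
  have hD2s : ContDiffOn ℝ 0 D2 (K δ) := contDiffOn_Dv hδ hD1s (by norm_num) _
  -- differentiability
  have dF : DifferentiableOn ℝ F (K δ) := hF4.differentiableOn (by norm_num)
  have dX1 : DifferentiableOn ℝ X1 (K δ) := hX1s.differentiableOn (by norm_num)
  have dX2 : DifferentiableOn ℝ X2 (K δ) := hX2s.differentiableOn (by norm_num)
  have dY1 : DifferentiableOn ℝ Y1 (K δ) := hY1s.differentiableOn (by norm_num)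
  have dA1 : DifferentiableOn ℝ A1 (K δ) := hA1s.differentiableOn (by norm_num)
  have dBb1 : DifferentiableOn ℝ Bb1 (K δ) := hBb1s.differentiableOn (by norm_num)
  have dY2 : DifferentiableOn ℝ Y2 (K δ) := hY2s.differentiableOn (by norm_num)
  have dA2 : DifferentiableOn ℝ A2 (K δ) := hA2s.differentiableOn (by norm_num)
  have dW1 : DifferentiableOn ℝ W1 (K δ) := hW1s.differentiableOn (by norm_num)
  have dC1 : DifferentiableOn ℝ C1 (K δ) := hC1s.differentiableOn (by norm_num)
  have dD1 : DifferentiableOn ℝ D1 (K δ) := hD1s.differentiableOn (by norm_num)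
  have dW2 : DifferentiableOn ℝ W2 (K δ) := hW2s.differentiableOn (by norm_num)
  have dC2 : DifferentiableOn ℝ C2 (K δ) := hC2s.differentiableOn (by norm_num)
  -- swap identities
  have S1 : ∀ p ∈ K δ, Dv δ (1,0,0) Y1 p = A1 p := fun p hp =>
    swapD hδ hF4 (by norm_num) hp _ _
  have S2 : ∀ p ∈ K δ, Dv δ (1,0,0) A1 p = Bb1 p := fun p hp =>
    swapD hδ hX1s (by norm_num) hp _ _
  have S3 : ∀ p ∈ K δ, Dv δ (1,0,0) Y2 p = A2 p := by
    intro p hp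
    have h1 : Dv δ (1,0,0) (Dv δ (0,0,1) Y1) p = Dv δ (0,0,1) (Dv δ (1,0,0) Y1) p :=
      swapD hδ hY1s (by norm_num) hp _ _
    have h2 : Dv δ (0,0,1) (Dv δ (1,0,0) Y1) p = Dv δ (0,0,1) A1 p := by
      show fderivWithin ℝ _ (K δ) p _ = fderivWithin ℝ _ (K δ) p _
      rw [fderivWithin_congr (fun q hq => S1 q hq) (S1 p hp)]
    exact h1.trans h2
  have S4 : ∀ p ∈ K δ, Dv δ (1,0,0) A2 p = B2 p := by
    intro p hp
    have h1 : Dv δ (1,0,0) (Dv δ (0,0,1) A1) p = Dv δ (0,0,1) (Dv δ (1,0,0) A1) p :=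
      swapD hδ hA1s (by norm_num) hp _ _
    have h2 : Dv δ (0,0,1) (Dv δ (1,0,0) A1) p = Dv δ (0,0,1) Bb1 p := by
      show fderivWithin ℝ _ (K δ) p _ = fderivWithin ℝ _ (K δ) p _
      rw [fderivWithin_congr (fun q hq => S2 q hq) (S2 p hp)]
    exact h1.trans h2
  have S5 : ∀ p ∈ K δ, Dv δ (1,0,0) W1 p = C1 p := fun p hp =>
    swapD hδ hF4 (by norm_num) hp _ _
  have S6 : ∀ p ∈ K δ, Dv δ (1,0,0) C1 p = D1 p := fun p hp =>
    swapD hδ hX1s (by norm_num) hp _ _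
  have S7 : ∀ p ∈ K δ, Dv δ (1,0,0) W2 p = C2 p := by
    intro p hp
    have h1 : Dv δ (1,0,0) (Dv δ (0,1,0) W1) p = Dv δ (0,1,0) (Dv δ (1,0,0) W1) p :=
      swapD hδ hW1s (by norm_num) hp _ _
    have h2 : Dv δ (0,1,0) (Dv δ (1,0,0) W1) p = Dv δ (0,1,0) C1 p := by
      show fderivWithin ℝ _ (K δ) p _ = fderivWithin ℝ _ (K δ) p _
      rw [fderivWithin_congr (fun q hq => S5 q hq) (S5 p hp)]
    exact h1.trans h2
  have S8 : ∀ p ∈ K δ, Dv δ (1,0,0) C2 p = D2 p := by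
    intro p hp
    have h1 : Dv δ (1,0,0) (Dv δ (0,1,0) C1) p = Dv δ (0,1,0) (Dv δ (1,0,0) C1) p :=
      swapD hδ hC1s (by norm_num) hp _ _
    have h2 : Dv δ (0,1,0) (Dv δ (1,0,0) C1) p = Dv δ (0,1,0) D1 p := by
      show fderivWithin ℝ _ (K δ) p _ = fderivWithin ℝ _ (K δ) p _
      rw [fderivWithin_congr (fun q hq => S6 q hq) (S6 p hp)]
    exact h1.trans h2

  -- slice helpers
  have sliceT : ∀ (g : ℝ×ℝ×ℝ→ℝ), DifferentiableOn ℝ g (K δ) → ∀ x' ∈ Icc (-δ) δ,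
      ∀ z ∈ Icc (-δ) δ, ∀ s ∈ Icc (-δ) δ,
      HasDerivWithinAt (fun u => g (u,x',z)) (Dv δ (1,0,0) g (s,x',z)) (Icc (-δ) δ) s :=
    fun g hg x' hx' z hz s hs => slice1 (hg _ (mem_K.2 ⟨hs,hx',hz⟩)) hx' hz
  have sliceX : ∀ (g : ℝ×ℝ×ℝ→ℝ), DifferentiableOn ℝ g (K δ) → ∀ s ∈ Icc (-δ) δ,
      ∀ z ∈ Icc (-δ) δ, ∀ x' ∈ Icc (-δ) δ,
      HasDerivWithinAt (fun w => g (s,w,z)) (Dv δ (0,1,0) g (s,x',z)) (Icc (-δ) δ) x' :=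
    fun g hg s hs z hz x' hx' => slice2 (hg _ (mem_K.2 ⟨hs,hx',hz⟩)) hs hz
  have sliceY : ∀ (g : ℝ×ℝ×ℝ→ℝ), DifferentiableOn ℝ g (K δ) → ∀ s ∈ Icc (-δ) δ,
      ∀ x' ∈ Icc (-δ) δ, ∀ z ∈ Icc (-δ) δ,
      HasDerivWithinAt (fun u => g (s,x',u)) (Dv δ (0,0,1) g (s,x',z)) (Icc (-δ) δ) z :=
    fun g hg s hs x' hx' z hz => slice3 (hg _ (mem_K.2 ⟨hs,hx',hz⟩)) hs hx'
  have h0I : (0:ℝ) ∈ Icc (-δ) δ := ⟨by linarith, by linarith⟩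
  have hIcc_nhds : ∀ s : ℝ, |s| < δ → Icc (-δ) δ ∈ 𝓝 s := by
    intro s hs
    rcases abs_lt.1 hs with ⟨h1, h2⟩
    exact Icc_mem_nhds h1 h2
  have hudI := uniqueDiffOn_Icc (neg_lt_self hδ)
  -- constants from the initial condition
  have hY1zero : ∀ x' ∈ Icc (-δ) δ, ∀ z ∈ Icc (-δ) δ, Y1 (0,x',z) = 0 := by
    intro x' hx' z hz
    have h := sliceY F dF 0 h0I x' hx' z hz
    have h2 : HasDerivWithinAt (fun _ : ℝ => x') (Y1 (0,x',z)) (Icc (-δ) δ) z :=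
      h.congr (fun u _ => (hinit x' u).symm) (hinit x' z).symm
    exact (hudI z hz).eq_deriv _ h2 (hasDerivWithinAt_const z _ x')
  have hW1one : ∀ x' ∈ Icc (-δ) δ, ∀ z ∈ Icc (-δ) δ, W1 (0,x',z) = 1 := by
    intro x' hx' z hz
    have h := sliceX F dF 0 h0I z hz x' hx'
    have h2 : HasDerivWithinAt (fun w : ℝ => w) (W1 (0,x',z)) (Icc (-δ) δ) x' :=
      h.congr (fun u _ => (hinit u z).symm) (hinit x' z).symm
    exact (hudI x' hx').eq_deriv _ h2 (hasDerivWithinAt_id x' _)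
  have hY2zero : ∀ x' ∈ Icc (-δ) δ, ∀ z ∈ Icc (-δ) δ, Y2 (0,x',z) = 0 := by
    intro x' hx' z hz
    have h := sliceY Y1 dY1 0 h0I x' hx' z hz
    have h2 : HasDerivWithinAt (fun _ : ℝ => (0:ℝ)) (Y2 (0,x',z)) (Icc (-δ) δ) z :=
      h.congr (fun u hu => (hY1zero x' hx' u hu).symm) (hY1zero x' hx' z hz).symm
    exact (hudI z hz).eq_deriv _ h2 (hasDerivWithinAt_const z _ 0)
  have hW2zero : ∀ x' ∈ Icc (-δ) δ, ∀ z ∈ Icc (-δ) δ, W2 (0,x',z) = 0 := by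
    intro x' hx' z hz
    have h := sliceX W1 dW1 0 h0I z hz x' hx'
    have h2 : HasDerivWithinAt (fun _ : ℝ => (1:ℝ)) (W2 (0,x',z)) (Icc (-δ) δ) x' :=
      h.congr (fun u hu => (hW1one u hu z hz).symm) (hW1one x' hx' z hz).symm
    exact (hudI x' hx').eq_deriv _ h2 (hasDerivWithinAt_const x' _ 1)
  -- full t-derivatives on the open interval
  have hderivF : ∀ x' ∈ Icc (-δ) δ, ∀ z ∈ Icc (-δ) δ, ∀ s ∈ Ioo (-δ) δ,
      HasDerivAt (fun u => X u x' z) (X1 (s,x',z)) s := by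
    intro x' hx' z hz s hs
    exact (sliceT F dF x' hx' z hz s (Ioo_subset_Icc_self hs)).hasDerivAt
      (hIcc_nhds s (abs_lt.2 ⟨hs.1, hs.2⟩))
  have hca : ∀ x' ∈ Icc (-δ) δ, ∀ z ∈ Icc (-δ) δ,
      deriv (fun s => X s x' z) 0 = X1 (0,x',z) := by
    intro x' hx' z hz
    exact (hderivF x' hx' z hz 0 ⟨by linarith, hδ⟩).deriv
  have hIooN : Ioo (-δ) δ ∈ 𝓝 (0:ℝ) := Ioo_mem_nhds (by linarith) hδ
  have hcb : ∀ x' ∈ Icc (-δ) δ, ∀ z ∈ Icc (-δ) δ,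
      iteratedDeriv 2 (fun s => X s x' z) 0 = X2 (0,x',z) := by
    intro x' hx' z hz
    rw [iteratedDeriv_succ, iteratedDeriv_one]
    have hev : deriv (fun s => X s x' z) =ᶠ[𝓝 0] fun s => X1 (s,x',z) := by
      filter_upwards [hIooN] with s hs using (hderivF x' hx' z hz s hs).deriv
    rw [hev.deriv_eq]
    exact ((sliceT X1 dX1 x' hx' z hz 0 h0I).hasDerivAt
      (hIcc_nhds 0 (by simpa using hδ))).deriv
  have hit2 : ∀ x' ∈ Icc (-δ) δ, ∀ z ∈ Icc (-δ) δ, ∀ s ∈ Ioo (-δ) δ,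
      iteratedDeriv 2 (fun u => X u x' z) s = X2 (s,x',z) := by
    intro x' hx' z hz s hs
    rw [iteratedDeriv_succ, iteratedDeriv_one]
    have hev : deriv (fun u => X u x' z) =ᶠ[𝓝 s] fun u => X1 (u,x',z) := by
      filter_upwards [isOpen_Ioo.mem_nhds hs] with u hu using (hderivF x' hx' z hz u hu).deriv
    rw [hev.deriv_eq]
    exact ((sliceT X1 dX1 x' hx' z hz s (Ioo_subset_Icc_self hs)).hasDerivAt
      (hIcc_nhds s (abs_lt.2 ⟨hs.1, hs.2⟩))).deriv
  have hcc : ∀ x' ∈ Icc (-δ) δ, ∀ z ∈ Icc (-δ) δ,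
      iteratedDeriv 3 (fun s => X s x' z) 0 = X3 (0,x',z) := by
    intro x' hx' z hz
    rw [show (3:ℕ) = 2 + 1 from rfl, iteratedDeriv_succ]
    have hev2 : iteratedDeriv 2 (fun u => X u x' z) =ᶠ[𝓝 0] fun s => X2 (s,x',z) := by
      filter_upwards [hIooN] with s hs using hit2 x' hx' z hz s hs
    rw [hev2.deriv_eq]
    exact ((sliceT X2 dX2 x' hx' z hz 0 h0I).hasDerivAt
      (hIcc_nhds 0 (by simpa using hδ))).deriv
  -- explicit formula for ρ
  have hρ' : ∀ x' ∈ Icc (-δ) δ, ∀ z ∈ Icc (-δ) δ, ∀ s : ℝ, s ≠ 0 →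
      ρ s x' z = (F (s,x',z) - x')/s - X1 (0,x',z) - X2 (0,x',z) * s/2 := by
    intro x' hx' z hz s hs
    rw [hρ s x' z hs, hca x' hx' z hz, hcb x' hx' z hz]
  -- uniform continuity moduli
  have hε5 : (0:ℝ) < ε/5 := by linarith
  obtain ⟨η1, hη1, hm1⟩ := uc hδ hX2s.continuousOn hε5
  obtain ⟨η2, hη2, hm2⟩ := uc hδ hX3s.continuousOn hε5
  obtain ⟨η3, hη3, hm3⟩ := uc hδ hBb1s.continuousOn hε5
  obtain ⟨η4, hη4, hm4⟩ := uc hδ hB2s.continuousOn hε5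
  obtain ⟨η5, hη5, hm5⟩ := uc hδ hD1s.continuousOn hε5
  obtain ⟨η6, hη6, hm6⟩ := uc hδ hD2s.continuousOn hε5
  refine ⟨min (min (min η1 η2) (min η3 η4)) (min (min η5 η6) (min (δ/2) 1)),
    by positivity, fun t x y ht0 htη hxa hya => ?_⟩
  have hxI : x ∈ Icc (-δ) δ := abs_le.1 hxa
  have hyI : y ∈ Icc (-δ) δ := abs_le.1 hya
  have htδ2 : |t| ≤ δ/2 := le_trans htη (le_trans (min_le_right _ _)
    (le_trans (min_le_right _ _) (min_le_left _ _)))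
  have ht1 : |t| ≤ 1 := le_trans htη (le_trans (min_le_right _ _)
    (le_trans (min_le_right _ _) (min_le_right _ _)))
  have htlt : |t| < δ := lt_of_le_of_lt htδ2 (by linarith)
  have htI : t ∈ Icc (-δ) δ := abs_le.1 (le_of_lt htlt)
  have htIoo : t ∈ Ioo (-δ) δ := by
    rcases abs_lt.1 htlt with ⟨h1, h2⟩; exact ⟨h1, h2⟩
  have htη1 : |t| ≤ η1 := le_trans htη (le_trans (min_le_left _ _)
    (le_trans (min_le_left _ _) (min_le_left _ _)))
  have htη2 : |t| ≤ η2 := le_trans htη (le_trans (min_le_left _ _)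
    (le_trans (min_le_left _ _) (min_le_right _ _)))
  have htη3 : |t| ≤ η3 := le_trans htη (le_trans (min_le_left _ _)
    (le_trans (min_le_right _ _) (min_le_left _ _)))
  have htη4 : |t| ≤ η4 := le_trans htη (le_trans (min_le_left _ _)
    (le_trans (min_le_right _ _) (min_le_right _ _)))
  have htη5 : |t| ≤ η5 := le_trans htη (le_trans (min_le_right _ _)
    (le_trans (min_le_left _ _) (min_le_left _ _)))
  have htη6 : |t| ≤ η6 := le_trans htη (le_trans (min_le_right _ _)
    (le_trans (min_le_left _ _) (min_le_right _ _)))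
  -- modulus instances
  have hbX2 : ∀ s ∈ Icc (-δ) δ, |s| ≤ |t| → |X2 (s,x,y) - X2 (0,x,y)| ≤ ε/5 :=
    fun s hs hst => hm1 s x y hs hxI hyI (le_trans hst htη1)
  have hbX3 : ∀ s ∈ Icc (-δ) δ, |s| ≤ |t| → |X3 (s,x,y) - X3 (0,x,y)| ≤ ε/5 :=
    fun s hs hst => hm2 s x y hs hxI hyI (le_trans hst htη2)
  have hbBb1 : ∀ s ∈ Icc (-δ) δ, |s| ≤ |t| → |Bb1 (s,x,y) - Bb1 (0,x,y)| ≤ ε/5 :=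
    fun s hs hst => hm3 s x y hs hxI hyI (le_trans hst htη3)
  have hbB2 : ∀ s ∈ Icc (-δ) δ, |s| ≤ |t| → |B2 (s,x,y) - B2 (0,x,y)| ≤ ε/5 :=
    fun s hs hst => hm4 s x y hs hxI hyI (le_trans hst htη4)
  have hbD1 : ∀ s ∈ Icc (-δ) δ, |s| ≤ |t| → |D1 (s,x,y) - D1 (0,x,y)| ≤ ε/5 :=
    fun s hs hst => hm5 s x y hs hxI hyI (le_trans hst htη5)
  have hbD2 : ∀ s ∈ Icc (-δ) δ, |s| ≤ |t| → |D2 (s,x,y) - D2 (0,x,y)| ≤ ε/5 :=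
    fun s hs hst => hm6 s x y hs hxI hyI (le_trans hst htη6)
  -- abbreviation identities, then make the definitions opaque
  have T1 : Dv δ (1,0,0) F = X1 := rfl
  have T2 : Dv δ (1,0,0) X1 = X2 := rfl
  have T3 : Dv δ (1,0,0) X2 = X3 := rfl
  have T4 : Dv δ (0,0,1) F = Y1 := rfl
  have T5 : Dv δ (0,0,1) X1 = A1 := rfl
  have T6 : Dv δ (0,0,1) X2 = Bb1 := rfl
  have T7 : Dv δ (0,0,1) Y1 = Y2 := rfl
  have T8 : Dv δ (0,0,1) A1 = A2 := rfl
  have T9 : Dv δ (0,0,1) Bb1 = B2 := rfl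
  have T10 : Dv δ (0,1,0) F = W1 := rfl
  have T11 : Dv δ (0,1,0) X1 = C1 := rfl
  have T12 : Dv δ (0,1,0) X2 = D1 := rfl
  have T13 : Dv δ (0,1,0) W1 = W2 := rfl
  have T14 : Dv δ (0,1,0) C1 = C2 := rfl
  have T15 : Dv δ (0,1,0) D1 = D2 := rfl
  clear_value F X1 X2 X3 Y1 A1 Bb1 Y2 A2 B2 W1 C1 D1 W2 C2 D2
  -- Taylor columns
  have col2 : ∀ (g g1 g2 : ℝ×ℝ×ℝ→ℝ),
      (∀ p ∈ K δ, Dv δ (1,0,0) g p = g1 p) → (∀ p ∈ K δ, Dv δ (1,0,0) g1 p = g2 p) →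
      DifferentiableOn ℝ g (K δ) → DifferentiableOn ℝ g1 (K δ) →
      (∀ s ∈ Icc (-δ) δ, |s| ≤ |t| → |g2 (s,x,y) - g2 (0,x,y)| ≤ ε/5) →
      |g1 (t,x,y) - g1 (0,x,y) - t * g2 (0,x,y)| ≤ ε/5 * |t| ∧
      |g (t,x,y) - g (0,x,y) - t * g1 (0,x,y) - t^2/2 * g2 (0,x,y)| ≤ ε/5 * |t| * |t| := by
    intro g g1 g2 hs1 hs2 dg dg1 hb
    have h1 : ∀ s ∈ Icc (-δ) δ,
        HasDerivWithinAt (fun u => g (u,x,y)) (g1 (s,x,y)) (Icc (-δ) δ) s := by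
      intro s hs
      have h := sliceT g dg x hxI y hyI s hs
      rwa [hs1 _ (mem_K.2 ⟨hs,hxI,hyI⟩)] at h
    have h2 : ∀ s ∈ Icc (-δ) δ,
        HasDerivWithinAt (fun u => g1 (u,x,y)) (g2 (s,x,y)) (Icc (-δ) δ) s := by
      intro s hs
      have h := sliceT g1 dg1 x hxI y hyI s hs
      rwa [hs2 _ (mem_K.2 ⟨hs,hxI,hyI⟩)] at h
    exact taylor2 (f := fun s => g (s,x,y)) (f' := fun s => g1 (s,x,y))
      (f'' := fun s => g2 (s,x,y)) htI h1 h2 hb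
  have colF := col2 F X1 X2 (fun p _ => congrFun T1 p) (fun p _ => congrFun T2 p) dF dX1 hbX2
  have colY1 := col2 Y1 A1 Bb1 S1 S2 dY1 dA1 hbBb1
  have colY2 := col2 Y2 A2 B2 S3 S4 dY2 dA2 hbB2
  have colW1 := col2 W1 C1 D1 S5 S6 dW1 dC1 hbD1
  have colW2 := col2 W2 C2 D2 S7 S8 dW2 dC2 hbD2
  have t3 := taylor3 (f := fun s => F (s,x,y)) (f' := fun s => X1 (s,x,y))
    (f'' := fun s => X2 (s,x,y)) (f''' := fun s => X3 (s,x,y)) htI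
    (fun s hs => by have h := sliceT F dF x hxI y hyI s hs; rwa [T1] at h)
    (fun s hs => by have h := sliceT X1 dX1 x hxI y hyI s hs; rwa [T2] at h)
    (fun s hs => by have h := sliceT X2 dX2 x hxI y hyI s hs; rwa [T3] at h) hbX3
  have hF0 : F (0,x,y) = x := by rw [hFdef]; exact hinit x y
  -- full derivative of the ρ-slice in t
  have hRT : ∀ x' ∈ Icc (-δ) δ, ∀ z ∈ Icc (-δ) δ, ∀ s : ℝ, s ≠ 0 → s ∈ Ioo (-δ) δ →
      HasDerivAt (fun u => ρ u x' z)
        (X1 (s,x',z)/s - (F (s,x',z) - x')/s^2 - X2 (0,x',z)/2) s := by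
    intro x' hx' z hz s hs0 hsI
    have hF' : HasDerivAt (fun u => F (u,x',z) - x') (X1 (s,x',z)) s := by
      have h := sliceT F dF x' hx' z hz s (Ioo_subset_Icc_self hsI)
      rw [T1] at h
      exact (h.hasDerivAt (hIcc_nhds s (abs_lt.2 ⟨hsI.1, hsI.2⟩))).sub_const x'
    have hdiv : HasDerivAt (fun u => (F (u,x',z) - x')/u)
        ((X1 (s,x',z) * s - (F (s,x',z) - x') * 1)/s^2) s := hF'.div (hasDerivAt_id s) hs0
    have hlin : HasDerivAt (fun u => X2 (0,x',z) * u / 2) (X2 (0,x',z)/2) s := by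
      simpa using ((hasDerivAt_id s).const_mul (X2 (0,x',z))).div_const 2
    have hcomb := (hdiv.sub_const (X1 (0,x',z))).sub hlin
    have heq : (fun u => ρ u x' z) =ᶠ[𝓝 s]
        (fun u => (F (u,x',z) - x')/u - X1 (0,x',z) - X2 (0,x',z) * u / 2) := by
      filter_upwards [eventually_ne_nhds hs0] with u hu using hρ' x' hx' z hz u hu
    have hfin := hcomb.congr_of_eventuallyEq heq
    refine hfin.congr_deriv ?_
    rw [sub_div, mul_one, pow_two, mul_div_mul_right _ _ hs0]
  -- within-derivative of ρ in the y-direction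
  have hG3core : ∀ z ∈ Icc (-δ) δ, HasDerivWithinAt (fun z' => ρ t x z')
      (Y1 (t,x,z)/t - A1 (0,x,z) - Bb1 (0,x,z) * t/2) (Icc (-δ) δ) z := by
    intro z hz
    have h1 : HasDerivWithinAt (fun z' => (F (t,x,z') - x)/t) (Y1 (t,x,z)/t) (Icc (-δ) δ) z := by
      have h := sliceY F dF t htI x hxI z hz
      rw [T4] at h
      exact (h.sub_const x).div_const t
    have h2 := sliceY X1 dX1 0 h0I x hxI z hz
    rw [T5] at h2
    have h3 : HasDerivWithinAt (fun z' => X2 (0,x,z') * t/2) (Bb1 (0,x,z) * t/2)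
        (Icc (-δ) δ) z := by
      have h := sliceY X2 dX2 0 h0I x hxI z hz
      rw [T6] at h
      exact (h.mul_const t).div_const 2
    exact ((h1.sub h2).sub h3).congr (fun z' hz' => hρ' x hxI z' hz' t ht0)
      (hρ' x hxI z hz t ht0)
  -- within-derivative of ρ in the x-direction
  have hG6core : ∀ w ∈ Icc (-δ) δ, HasDerivWithinAt (fun w' => ρ t w' y)
      ((W1 (t,w,y) - 1)/t - C1 (0,w,y) - D1 (0,w,y) * t/2) (Icc (-δ) δ) w := by
    intro w hw
    have h1 : HasDerivWithinAt (fun w' => (F (t,w',y) - w')/t) ((W1 (t,w,y) - 1)/t)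
        (Icc (-δ) δ) w := by
      have h := sliceX F dF t htI y hyI w hw
      rw [T10] at h
      exact (h.sub (hasDerivWithinAt_id w _)).div_const t
    have h2 := sliceX X1 dX1 0 h0I y hyI w hw
    rw [T11] at h2
    have h3 : HasDerivWithinAt (fun w' => X2 (0,w',y) * t/2) (D1 (0,w,y) * t/2)
        (Icc (-δ) δ) w := by
      have h := sliceX X2 dX2 0 h0I y hyI w hw
      rw [T12] at h
      exact (h.mul_const t).div_const 2
    exact ((h1.sub h2).sub h3).congr (fun w' hw' => hρ' w' hw' y hyI t ht0)
      (hρ' w hw y hyI t ht0)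
  refine ⟨?_, ?_, ?_, ?_, ?_, ?_, ?_, ?_, ?_⟩
  -- G1
  · rw [hρ' x hxI y hyI t ht0]
    have hE := colF.2
    rw [hF0] at hE
    have heq : (F (t,x,y) - x)/t - X1 (0,x,y) - X2 (0,x,y) * t/2
        = (F (t,x,y) - x - t * X1 (0,x,y) - t^2/2 * X2 (0,x,y))/t := by
      field_simp
    rw [heq]
    exact le_trans (bound1 ht0 ht1 hE) (by linarith)
  -- G2
  · rw [(hRT x hxI y hyI t ht0 htIoo).deriv]
    have hE1 := colF.1
    have hE0 := colF.2
    rw [hF0] at hE0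
    have heq : X1 (t,x,y)/t - (F (t,x,y) - x)/t^2 - X2 (0,x,y)/2
        = (X1 (t,x,y) - X1 (0,x,y) - t * X2 (0,x,y))/t
          - (F (t,x,y) - x - t * X1 (0,x,y) - t^2/2 * X2 (0,x,y))/t^2 := by
      field_simp; ring
    rw [heq]
    exact le_trans (bound2 ht0 hE1 hE0) (by linarith)
  -- G3
  · refine lemA hδ hyI (hG3core y hyI) ?_ hε.le
    have hE := colY1.2
    rw [hY1zero x hxI y hyI] at hE
    have heq : Y1 (t,x,y)/t - A1 (0,x,y) - Bb1 (0,x,y) * t/2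
        = (Y1 (t,x,y) - 0 - t * A1 (0,x,y) - t^2/2 * Bb1 (0,x,y))/t := by
      field_simp; ring
    rw [heq]
    exact le_trans (bound1 ht0 ht1 hE) (by linarith)
  -- G4
  · have hfun : ∀ z ∈ Icc (-δ) δ, deriv (fun s => ρ s x z) t
        = X1 (t,x,z)/t - (F (t,x,z) - x)/t^2 - X2 (0,x,z)/2 :=
      fun z hz => (hRT x hxI z hz t ht0 htIoo).deriv
    have hR1 : HasDerivWithinAt (fun z => X1 (t,x,z)/t - (F (t,x,z) - x)/t^2 - X2 (0,x,z)/2)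
        (A1 (t,x,y)/t - Y1 (t,x,y)/t^2 - Bb1 (0,x,y)/2) (Icc (-δ) δ) y := by
      have h1 := sliceY X1 dX1 t htI x hxI y hyI
      rw [T5] at h1
      have h2 := sliceY F dF t htI x hxI y hyI
      rw [T4] at h2
      have h3 := sliceY X2 dX2 0 h0I x hxI y hyI
      rw [T6] at h3
      exact ((h1.div_const t).sub ((h2.sub_const x).div_const (t^2))).sub (h3.div_const 2)
    refine lemA hδ hyI (hR1.congr (fun z hz => hfun z hz) (hfun y hyI)) ?_ hε.le
    have hE1 := colY1.1
    have hE0 := colY1.2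
    rw [hY1zero x hxI y hyI] at hE0
    have heq : A1 (t,x,y)/t - Y1 (t,x,y)/t^2 - Bb1 (0,x,y)/2
        = (A1 (t,x,y) - A1 (0,x,y) - t * Bb1 (0,x,y))/t
          - (Y1 (t,x,y) - 0 - t * A1 (0,x,y) - t^2/2 * Bb1 (0,x,y))/t^2 := by
      field_simp; ring
    rw [heq]
    exact le_trans (bound2 ht0 hE1 hE0) (by linarith)
  -- G5
  · rw [iteratedDeriv_succ, iteratedDeriv_one]
    have hg : HasDerivWithinAt (fun z => Y1 (t,x,z)/t - A1 (0,x,z) - Bb1 (0,x,z) * t/2)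
        (Y2 (t,x,y)/t - A2 (0,x,y) - B2 (0,x,y) * t/2) (Icc (-δ) δ) y := by
      have h1 := sliceY Y1 dY1 t htI x hxI y hyI
      rw [T7] at h1
      have h2 := sliceY A1 dA1 0 h0I x hxI y hyI
      rw [T8] at h2
      have h3 := sliceY Bb1 dBb1 0 h0I x hxI y hyI
      rw [T9] at h3
      exact ((h1.div_const t).sub h2).sub ((h3.mul_const t).div_const 2)
    refine lemB hδ hyI (fun z hz => ?_) hg ?_ hε.le
    · exact ((hG3core z (Ioo_subset_Icc_self hz)).hasDerivAt
        (hIcc_nhds z (abs_lt.2 ⟨hz.1, hz.2⟩))).deriv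
    · have hE := colY2.2
      rw [hY2zero x hxI y hyI] at hE
      have heq : Y2 (t,x,y)/t - A2 (0,x,y) - B2 (0,x,y) * t/2
          = (Y2 (t,x,y) - 0 - t * A2 (0,x,y) - t^2/2 * B2 (0,x,y))/t := by
        field_simp; ring
      rw [heq]
      exact le_trans (bound1 ht0 ht1 hE) (by linarith)
  -- G6
  · refine lemA hδ hxI (hG6core x hxI) ?_ hε.le
    have hE := colW1.2
    rw [hW1one x hxI y hyI] at hE
    have heq : (W1 (t,x,y) - 1)/t - C1 (0,x,y) - D1 (0,x,y) * t/2
        = (W1 (t,x,y) - 1 - t * C1 (0,x,y) - t^2/2 * D1 (0,x,y))/t := by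
      field_simp
    rw [heq]
    exact le_trans (bound1 ht0 ht1 hE) (by linarith)
  -- G7
  · have hfun : ∀ w ∈ Icc (-δ) δ, deriv (fun s => ρ s w y) t
        = X1 (t,w,y)/t - (F (t,w,y) - w)/t^2 - X2 (0,w,y)/2 :=
      fun w hw => (hRT w hw y hyI t ht0 htIoo).deriv
    have hR1 : HasDerivWithinAt (fun w => X1 (t,w,y)/t - (F (t,w,y) - w)/t^2 - X2 (0,w,y)/2)
        (C1 (t,x,y)/t - (W1 (t,x,y) - 1)/t^2 - D1 (0,x,y)/2) (Icc (-δ) δ) x := by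
      have h1 := sliceX X1 dX1 t htI y hyI x hxI
      rw [T11] at h1
      have h2 := sliceX F dF t htI y hyI x hxI
      rw [T10] at h2
      have h3 := sliceX X2 dX2 0 h0I y hyI x hxI
      rw [T12] at h3
      exact ((h1.div_const t).sub ((h2.sub
        (hasDerivWithinAt_id x _)).div_const (t^2))).sub (h3.div_const 2)
    refine lemA hδ hxI (hR1.congr (fun w hw => hfun w hw) (hfun x hxI)) ?_ hε.le
    have hE1 := colW1.1
    have hE0 := colW1.2
    rw [hW1one x hxI y hyI] at hE0
    have heq : C1 (t,x,y)/t - (W1 (t,x,y) - 1)/t^2 - D1 (0,x,y)/2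
        = (C1 (t,x,y) - C1 (0,x,y) - t * D1 (0,x,y))/t
          - (W1 (t,x,y) - 1 - t * C1 (0,x,y) - t^2/2 * D1 (0,x,y))/t^2 := by
      field_simp; ring
    rw [heq]
    exact le_trans (bound2 ht0 hE1 hE0) (by linarith)
  -- G8
  · rw [iteratedDeriv_succ, iteratedDeriv_one]
    have hg : HasDerivWithinAt (fun w => (W1 (t,w,y) - 1)/t - C1 (0,w,y) - D1 (0,w,y) * t/2)
        (W2 (t,x,y)/t - C2 (0,x,y) - D2 (0,x,y) * t/2) (Icc (-δ) δ) x := by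
      have h1 := sliceX W1 dW1 t htI y hyI x hxI
      rw [T13] at h1
      have h2 := sliceX C1 dC1 0 h0I y hyI x hxI
      rw [T14] at h2
      have h3 := sliceX D1 dD1 0 h0I y hyI x hxI
      rw [T15] at h3
      exact (((h1.sub_const 1).div_const t).sub h2).sub ((h3.mul_const t).div_const 2)
    refine lemB hδ hxI (fun w hw => ?_) hg ?_ hε.le
    · exact ((hG6core w (Ioo_subset_Icc_self hw)).hasDerivAt
        (hIcc_nhds w (abs_lt.2 ⟨hw.1, hw.2⟩))).deriv
    · have hE := colW2.2
      rw [hW2zero x hxI y hyI] at hE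
      have heq : W2 (t,x,y)/t - C2 (0,x,y) - D2 (0,x,y) * t/2
          = (W2 (t,x,y) - 0 - t * C2 (0,x,y) - t^2/2 * D2 (0,x,y))/t := by
        field_simp; ring
      rw [heq]
      exact le_trans (bound1 ht0 ht1 hE) (by linarith)
  -- G9
  · rw [hcc x hxI y hyI, iteratedDeriv_succ, iteratedDeriv_one]
    have hev : deriv (fun s => ρ s x y) =ᶠ[𝓝 t]
        (fun s => X1 (s,x,y)/s - (F (s,x,y) - x)/s^2 - X2 (0,x,y)/2) := by
      filter_upwards [isOpen_Ioo.mem_nhds htIoo, eventually_ne_nhds ht0] with s hs1 hs2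
      exact (hRT x hxI y hyI s hs2 hs1).deriv
    rw [hev.deriv_eq]
    have hX1' : HasDerivAt (fun u => X1 (u,x,y)) (X2 (t,x,y)) t := by
      have h := sliceT X1 dX1 x hxI y hyI t htI
      rw [T2] at h
      exact h.hasDerivAt (hIcc_nhds t htlt)
    have hF' : HasDerivAt (fun u => F (u,x,y) - x) (X1 (t,x,y)) t := by
      have h := sliceT F dF x hxI y hyI t htI
      rw [T1] at h
      exact (h.hasDerivAt (hIcc_nhds t htlt)).sub_const x
    have h1 := hX1'.div (hasDerivAt_id' (x := t)) ht0
    have h2 := hF'.div (hasDerivAt_pow 2 t) (pow_ne_zero 2 ht0)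
    have hR := (h1.sub h2).sub_const (X2 (0,x,y)/2)
    rw [show deriv (fun s => X1 (s,x,y)/s - (F (s,x,y) - x)/s^2 - X2 (0,x,y)/2) t = _ from hR.deriv]
    obtain ⟨hE2, hE1, hE0⟩ := t3
    beta_reduce at hE2 hE1 hE0
    rw [hF0] at hE0
    have hkey : (X2 (t,x,y) * t - X1 (t,x,y) * 1)/t^2
          - (X1 (t,x,y) * t^2 - (F (t,x,y) - x) * ((2:ℕ) * t^(2-1)))/(t^2)^2
          - X3 (0,x,y)/3
        = (X2 (t,x,y) - X2 (0,x,y) - t * X3 (0,x,y))/t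
          - 2 * (X1 (t,x,y) - X1 (0,x,y) - t * X2 (0,x,y) - t^2/2 * X3 (0,x,y))/t^2
          + 2 * (F (t,x,y) - x - t * X1 (0,x,y) - t^2/2 * X2 (0,x,y)
              - t^3/6 * X3 (0,x,y))/t^3 := by
      push_cast
      field_simp
      ring
    rw [hkey]
    exact le_trans (bound3 ht0 hE2 hE1 hE0) (by linarith)
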